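/- Let B be a finite Blaschke product of degree n ≥ 1. Then B has exactly n - 1 critical points in the open unit disk, counted with multiplicity. -/

import Mathlib

open Polynomial Finset
noncomputable section
namespace BlaschkeAux

lemma derivative_finset_prod {ι : Type*} [DecidableEq ι] (s : Finset ι) (f : ι → ℂ[X]) :
    derivative (∏ i ∈ s, f i) = ∑ i ∈ s, (∏ j ∈ s.erase i, f j) * derivative (f i) := by
  induction s using Finset.induction with
  | empty => simp
  | @insert x s hx ih =>
    have h1 : ∀ i ∈ s, f x * ((∏ j ∈ s.erase i, f j) * derivative (f i))
        = (∏ j ∈ (insert x s).erase i, f j) * derivative (f i) := by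
      intro i hi
      rw [Finset.erase_insert_of_ne (by rintro rfl; exact hx hi), Finset.prod_insert
        (fun h => hx (Finset.mem_of_mem_erase h))]
      ring
    rw [Finset.prod_insert hx, derivative_mul, Finset.sum_insert hx, Finset.erase_insert hx, ih,
      Finset.mul_sum, Finset.sum_congr rfl h1, mul_comm, add_comm]

section defs
variable {n : ℕ} (a : Fin n → ℂ)

def pP : ℂ[X] := ∏ i, (X - C (a i))
def qP : ℂ[X] := ∏ i, (1 - C ((starRingEnd ℂ) (a i)) * X)
def WP : ℂ[X] := ∑ i, C (1 - (starRingEnd ℂ) (a i) * a i) *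
    ∏ j ∈ Finset.univ.erase i, ((X - C (a j)) * (1 - C ((starRingEnd ℂ) (a j)) * X))

lemma key_identity : derivative (pP a) * qP a - pP a * derivative (qP a) = WP a := by
  rw [pP, qP, WP, derivative_finset_prod, derivative_finset_prod, Finset.sum_mul,
    Finset.mul_sum, ← Finset.sum_sub_distrib]
  refine Finset.sum_congr rfl fun i _ => ?_
  have hp : (∏ j, (X - C (a j))) = (X - C (a i)) * ∏ j ∈ Finset.univ.erase i, (X - C (a j)) :=
    (Finset.mul_prod_erase _ _ (Finset.mem_univ i)).symm
  have hq : (∏ j, (1 - C ((starRingEnd ℂ) (a j)) * X))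
      = (1 - C ((starRingEnd ℂ) (a i)) * X) *
        ∏ j ∈ Finset.univ.erase i, (1 - C ((starRingEnd ℂ) (a j)) * X) :=
    (Finset.mul_prod_erase _ _ (Finset.mem_univ i)).symm
  rw [hp, hq, Finset.prod_mul_distrib]
  simp only [derivative_sub, derivative_one, derivative_X, derivative_C_mul, derivative_X_sub_C,
    derivative_C, map_sub, map_one, map_mul]
  ring

lemma natDegree_WP_le (hn : 1 ≤ n) : (WP a).natDegree ≤ 2 * n - 2 := by
  have h2 : 2 * n - 2 = 2 * (n - 1) := by omega
  rw [WP, h2]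
  refine natDegree_sum_le_of_forall_le _ _ fun i _ => ?_
  refine (natDegree_C_mul_le _ _).trans ?_
  refine (natDegree_prod_le _ _).trans ?_
  have hb : ∀ j ∈ Finset.univ.erase i,
      ((X - C (a j)) * (1 - C ((starRingEnd ℂ) (a j)) * X)).natDegree ≤ 2 := by
    intro j _
    refine natDegree_mul_le.trans ?_
    have h1 := natDegree_X_sub_C (R := ℂ) (a j)
    have h3 : (1 - C ((starRingEnd ℂ) (a j)) * X : ℂ[X]).natDegree ≤ 1 := by
      refine (natDegree_sub_le _ _).trans ?_
      simpa using (natDegree_C_mul_le ((starRingEnd ℂ) (a j)) X).trans (by simp)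
    omega
  refine le_trans (Finset.sum_le_sum hb) ?_
  simp [Finset.card_erase_of_mem, mul_comm]

lemma qP_eval_ne_zero (ha : ∀ i, ‖a i‖ < 1) {z : ℂ} (hz : ‖z‖ ≤ 1) : eval z (qP a) ≠ 0 := by
  rw [qP, eval_prod]
  refine Finset.prod_ne_zero_iff.2 fun i _ => ?_
  simp only [eval_sub, eval_one, eval_mul, eval_C, eval_X]
  intro h
  have h2 : ‖(starRingEnd ℂ) (a i) * z‖ < 1 := by
    rw [norm_mul, RCLike.norm_conj]
    calc ‖a i‖ * ‖z‖ ≤ ‖a i‖ * 1 := by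
          exact mul_le_mul_of_nonneg_left hz (norm_nonneg _)
      _ < 1 := by simpa using ha i
  rw [sub_eq_zero] at h
  rw [← h] at h2
  simp at h2

lemma circle_ne_zero (hn : 1 ≤ n) (ha : ∀ i, ‖a i‖ < 1) {z : ℂ} (hz : ‖z‖ = 1) :
    eval z (WP a) ≠ 0 := by
  have hz1 : z * (starRingEnd ℂ) z = 1 := by
    rw [Complex.mul_conj, Complex.normSq_eq_norm_sq, hz]; norm_num
  have key : eval z (WP a) * ((starRingEnd ℂ) z) ^ (n - 1)
      = ↑(∑ i, (1 - Complex.normSq (a i)) *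
          ∏ j ∈ Finset.univ.erase i, Complex.normSq (z - a j)) := by
    rw [WP]
    simp only [eval_finset_sum, eval_mul, eval_prod, eval_sub, eval_one, eval_C, eval_X]
    rw [Finset.sum_mul]
    push_cast
    refine Finset.sum_congr rfl fun i _ => ?_
    have hcard : ((starRingEnd ℂ) z) ^ (n - 1)
        = ∏ _j ∈ Finset.univ.erase i, (starRingEnd ℂ) z := by
      rw [Finset.prod_const, Finset.card_erase_of_mem (Finset.mem_univ i)]
      simp
    have e1 : (1 : ℂ) - (starRingEnd ℂ) (a i) * a i = 1 - (Complex.normSq (a i) : ℂ) := by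
      rw [mul_comm, Complex.mul_conj]
    have e2 : ∀ j ∈ Finset.univ.erase i,
        (z - a j) * (1 - (starRingEnd ℂ) (a j) * z) * (starRingEnd ℂ) z
          = (Complex.normSq (z - a j) : ℂ) := by
      intro j _
      have : (1 - (starRingEnd ℂ) (a j) * z) * (starRingEnd ℂ) z
          = (starRingEnd ℂ) (z - a j) := by
        rw [map_sub]
        have : (starRingEnd ℂ) (a j) * z * (starRingEnd ℂ) z
            = (starRingEnd ℂ) (a j) * (z * (starRingEnd ℂ) z) := by ring
        rw [sub_mul, one_mul, this, hz1, mul_one]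
      rw [mul_assoc, this, Complex.mul_conj]
    calc ((1 - (starRingEnd ℂ) (a i) * a i) *
            ∏ j ∈ Finset.univ.erase i, ((z - a j) * (1 - (starRingEnd ℂ) (a j) * z)))
          * ((starRingEnd ℂ) z) ^ (n - 1)
        = (1 - (starRingEnd ℂ) (a i) * a i) *
            ∏ j ∈ Finset.univ.erase i,
              ((z - a j) * (1 - (starRingEnd ℂ) (a j) * z) * (starRingEnd ℂ) z) := by
          rw [hcard, mul_assoc, ← Finset.prod_mul_distrib]
      _ = (1 - (Complex.normSq (a i) : ℂ)) *
            ∏ j ∈ Finset.univ.erase i, (Complex.normSq (z - a j) : ℂ) := by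
          rw [e1, Finset.prod_congr rfl e2]
  have hpos : 0 < ∑ i, (1 - Complex.normSq (a i)) *
      ∏ j ∈ Finset.univ.erase i, Complex.normSq (z - a j) := by
    have : Nonempty (Fin n) := ⟨⟨0, hn⟩⟩
    refine Finset.sum_pos (fun i _ => ?_) Finset.univ_nonempty
    refine mul_pos ?_ (Finset.prod_pos fun j _ => ?_)
    · have : Complex.normSq (a i) < 1 := by
        rw [Complex.normSq_eq_norm_sq]
        calc ‖a i‖ ^ 2 ≤ ‖a i‖ * 1 := by
              rw [sq]; exact mul_le_mul_of_nonneg_left (ha i).le (norm_nonneg _)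
          _ < 1 := by simpa using ha i
      linarith
    · refine Complex.normSq_pos.2 (sub_ne_zero.2 fun h => ?_)
      have h2 := ha j
      rw [← h, hz] at h2
      exact absurd h2 (lt_irrefl 1)
  intro h0
  rw [h0, zero_mul] at key
  exact absurd (Complex.ofReal_eq_zero.1 key.symm) (ne_of_gt hpos)

lemma WP_ne_zero (hn : 1 ≤ n) (ha : ∀ i, ‖a i‖ < 1) : WP a ≠ 0 := fun h => by
  have := circle_ne_zero (a := a) hn ha (z := 1) (by simp)
  rw [h] at this; simp at this

lemma fe (hn : 1 ≤ n) {z : ℂ} (hz : z ≠ 0) :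
    eval z (WP a) = z ^ (2 * n - 2) *
      (starRingEnd ℂ) (eval (((starRingEnd ℂ) z)⁻¹) (WP a)) := by
  rw [WP]
  simp only [eval_finset_sum, eval_mul, eval_prod, eval_sub, eval_one, eval_C, eval_X,
    map_sum, map_mul, map_sub, map_one, map_prod, map_inv₀, Complex.conj_conj]
  rw [Finset.mul_sum]
  refine Finset.sum_congr rfl fun i _ => ?_
  have hcard : (z : ℂ) ^ (2 * n - 2) = ∏ _j ∈ Finset.univ.erase i, z ^ 2 := by
    have hc : (Finset.univ.erase i).card = n - 1 := by
      rw [Finset.card_erase_of_mem (Finset.mem_univ i), Finset.card_univ, Fintype.card_fin]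
    rw [Finset.prod_const, hc, ← pow_mul]
    congr 1
    omega
  have hfac : ∀ j ∈ Finset.univ.erase i,
      (z - a j) * (1 - (starRingEnd ℂ) (a j) * z)
        = z ^ 2 * ((z⁻¹ - (starRingEnd ℂ) (a j)) * (1 - a j * z⁻¹)) := by
    intro j _
    field_simp
  rw [Finset.prod_congr rfl hfac, Finset.prod_mul_distrib, ← hcard]
  ring

lemma roots_symmetry (hn : 1 ≤ n) (ha : ∀ i, ‖a i‖ < 1) :
    (WP a).roots = (2 * n - 2 - (WP a).natDegree) • ({(0 : ℂ)} : Multiset ℂ) +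
      ((WP a).roots.filter (· ≠ (0 : ℂ))).map (fun r => (((starRingEnd ℂ) r)⁻¹ : ℂ)) := by
  classical
  set W := WP a with hWdef
  set L := W.leadingCoeff with hL
  set d := W.natDegree with hd
  set k := 2 * n - 2 - d with hk
  have hW0 : W ≠ 0 := WP_ne_zero a hn ha
  have hdle : d ≤ 2 * n - 2 := natDegree_WP_le a hn
  have hL0 : L ≠ 0 := leadingCoeff_ne_zero.2 hW0
  have hcards : Multiset.card W.roots = d :=
    splits_iff_card_roots.1 (IsAlgClosed.splits W)
  have hfactW : C L * (W.roots.map fun r => X - C r).prod = W :=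
    C_leadingCoeff_mul_prod_multiset_X_sub_C hcards
  set Ψ : ℂ[X] := C ((starRingEnd ℂ) L) * X ^ k *
      (W.roots.map fun r => 1 - C ((starRingEnd ℂ) r) * X).prod with hΨ
  have hfacne : ∀ r : ℂ, (1 : ℂ[X]) - C ((starRingEnd ℂ) r) * X ≠ 0 := by
    intro r h
    have := congrArg (eval 0) h
    simp at this
  have hWΨ : W = Ψ := by
    apply eq_of_infinite_eval_eq
    refine Set.Infinite.mono ?_ ((Set.finite_singleton (0 : ℂ)).infinite_compl)
    intro z hz
    have hz0 : z ≠ 0 := hz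
    show eval z W = eval z Ψ
    have hevΨ : eval z Ψ = (starRingEnd ℂ) L * z ^ k *
        (W.roots.map fun r => 1 - (starRingEnd ℂ) r * z).prod := by
      rw [hΨ]
      simp [eval_multiset_prod, Multiset.map_map, Function.comp]
    have hevW : eval z W = z ^ (2 * n - 2) *
        ((starRingEnd ℂ) L * (W.roots.map fun r => z⁻¹ - (starRingEnd ℂ) r).prod) := by
      rw [fe a hn hz0]
      congr 1
      conv_lhs => rw [← hWdef, ← hfactW]
      rw [eval_mul, map_mul, eval_C, eval_multiset_prod, map_multiset_prod,
        Multiset.map_map, Multiset.map_map]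
      refine congrArg ((starRingEnd ℂ) L * ·)
        (congrArg Multiset.prod (Multiset.map_congr rfl fun r _ => ?_))
      simp [Function.comp, map_inv₀]
    rw [hevΨ, hevW]
    have hsplit : z ^ (2 * n - 2) = z ^ k * z ^ d := by
      rw [← pow_add]
      congr 1
      omega
    have hzd : z ^ d = (W.roots.map fun _ => z).prod := by
      rw [Multiset.map_const', Multiset.prod_replicate, hcards]
    have hcomb : (W.roots.map fun _ => z).prod *
        (W.roots.map fun r => z⁻¹ - (starRingEnd ℂ) r).prod
          = (W.roots.map fun r => 1 - (starRingEnd ℂ) r * z).prod := by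
      rw [← Multiset.prod_map_mul]
      refine congrArg _ (Multiset.map_congr rfl fun r _ => ?_)
      field_simp
    rw [hsplit]
    calc z ^ k * z ^ d * ((starRingEnd ℂ) L *
            (W.roots.map fun r => z⁻¹ - (starRingEnd ℂ) r).prod)
        = (starRingEnd ℂ) L * z ^ k * ((W.roots.map fun _ => z).prod *
            (W.roots.map fun r => z⁻¹ - (starRingEnd ℂ) r).prod) := by
          rw [hzd]; ring
      _ = (starRingEnd ℂ) L * z ^ k *
            (W.roots.map fun r => 1 - (starRingEnd ℂ) r * z).prod := by rw [hcomb]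
  have hprodne : (W.roots.map fun r => 1 - C ((starRingEnd ℂ) r) * X).prod ≠ 0 := by
    refine Multiset.prod_ne_zero fun h => ?_
    rcases Multiset.mem_map.1 h with ⟨r, _, hr⟩
    exact hfacne r hr
  have hrootsΨ : Ψ.roots = k • ({(0 : ℂ)} : Multiset ℂ) +
      ((W.roots.map fun r => 1 - C ((starRingEnd ℂ) r) * X).bind Polynomial.roots) := by
    rw [hΨ, mul_assoc, roots_C_mul _ (by simpa using hL0),
      roots_mul (mul_ne_zero (pow_ne_zero _ X_ne_zero) hprodne), roots_pow, roots_X,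
      roots_multiset_prod _ (fun h => by
        rcases Multiset.mem_map.1 h with ⟨r, _, hr⟩
        exact hfacne r hr)]
  have hr : ∀ r : ℂ, Polynomial.roots (1 - C ((starRingEnd ℂ) r) * X)
      = if r = 0 then 0 else {(((starRingEnd ℂ) r)⁻¹ : ℂ)} := by
    intro r
    by_cases h : r = 0
    · simp [h]
    · have hb : (starRingEnd ℂ) r ≠ 0 := by simpa using h
      have hpoly : C (-(starRingEnd ℂ) r) * (X - C (((starRingEnd ℂ) r)⁻¹))
          = (1 : ℂ[X]) - C ((starRingEnd ℂ) r) * X := by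
        rw [map_neg, neg_mul, mul_sub, ← C_mul, mul_inv_cancel₀ hb, C_1]
        ring
      rw [← hpoly, roots_C_mul _ (neg_ne_zero.2 hb), roots_X_sub_C, if_neg h]
  have hbind : (W.roots.map fun r => 1 - C ((starRingEnd ℂ) r) * X).bind Polynomial.roots
      = (W.roots.filter (· ≠ (0 : ℂ))).map (fun r => (((starRingEnd ℂ) r)⁻¹ : ℂ)) := by
    rw [Multiset.bind_map]
    conv_lhs => rw [show W.roots = W.roots.filter (· ≠ (0 : ℂ))
      + W.roots.filter (fun r => ¬ r ≠ (0 : ℂ)) from (Multiset.filter_add_not _ _).symm]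
    rw [Multiset.add_bind]
    have h1 : (W.roots.filter (· ≠ (0 : ℂ))).bind
        (fun r => Polynomial.roots (1 - C ((starRingEnd ℂ) r) * X))
          = (W.roots.filter (· ≠ (0 : ℂ))).map (fun r => (((starRingEnd ℂ) r)⁻¹ : ℂ)) := by
      refine Eq.trans (Multiset.bind_congr (fun r hrm => ?_))
        (Multiset.bind_singleton _ (fun r => (((starRingEnd ℂ) r)⁻¹ : ℂ)))
      rw [hr r, if_neg (Multiset.mem_filter.1 hrm).2]
    have h2 : (W.roots.filter (fun r => ¬ r ≠ (0 : ℂ))).bind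
        (fun r => Polynomial.roots (1 - C ((starRingEnd ℂ) r) * X)) = 0 := by
      have : (W.roots.filter (fun r => ¬ r ≠ (0 : ℂ))).bind
          (fun r => Polynomial.roots (1 - C ((starRingEnd ℂ) r) * X))
            = (W.roots.filter (fun r => ¬ r ≠ (0 : ℂ))).bind (fun _ => (0 : Multiset ℂ)) := by
        refine Multiset.bind_congr (fun r hrm => ?_)
        have hr0 : r = 0 := not_not.1 (Multiset.mem_filter.1 hrm).2
        rw [hr r, if_pos hr0]
      rw [this, Multiset.bind_zero]
    rw [h1, h2, add_zero]
  calc W.roots = Ψ.roots := by rw [← hWΨ]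
    _ = _ := by rw [hrootsΨ, hbind]


lemma count_in_disk (hn : 1 ≤ n) (ha : ∀ i, ‖a i‖ < 1) :
    Multiset.card ((WP a).roots.filter (fun z => ‖z‖ < 1)) = n - 1 := by
  classical
  set W := WP a with hWdef
  set d := W.natDegree with hd
  have hW0 : W ≠ 0 := WP_ne_zero a hn ha
  have hdle : d ≤ 2 * n - 2 := natDegree_WP_le a hn
  have hcards : Multiset.card W.roots = d :=
    splits_iff_card_roots.1 (IsAlgClosed.splits W)
  have hnocirc : ∀ z ∈ W.roots, ‖z‖ ≠ 1 := by
    intro z hz h1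
    exact circle_ne_zero a hn ha h1 (mem_roots'.1 hz).2
  have hAE : Multiset.card (W.roots.filter (fun z => ‖z‖ < 1)) +
      Multiset.card (W.roots.filter (fun z => 1 < ‖z‖)) = d := by
    have hfc : W.roots.filter (fun z => ¬ ‖z‖ < 1) = W.roots.filter (fun z => 1 < ‖z‖) := by
      refine Multiset.filter_congr fun z hz => ?_
      have h1 := hnocirc z hz
      constructor
      · intro h2
        rcases lt_trichotomy ‖z‖ 1 with h | h | h
        · exact absurd h h2
        · exact absurd h h1
        · exact h
      · intro h2 h3
        linarith
    have := congrArg Multiset.card (Multiset.filter_add_not (fun z => ‖z‖ < 1) W.roots)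
    rw [Multiset.card_add, hfc] at this
    rw [this, hcards]
  have hsym := roots_symmetry a hn ha
  rw [← hWdef, ← hd] at hsym
  have hA2 : Multiset.card (W.roots.filter (fun z => ‖z‖ < 1)) =
      (2 * n - 2 - d) + Multiset.card (W.roots.filter (fun z => 1 < ‖z‖)) := by
    conv_lhs => rw [hsym]
    rw [Multiset.filter_add, Multiset.card_add]
    congr 1
    · rw [Multiset.nsmul_singleton]
      rw [Multiset.filter_eq_self.2 (fun x hx => ?_), Multiset.card_replicate]
      rw [Multiset.eq_of_mem_replicate hx]
      simp
    · rw [Multiset.filter_map, Multiset.card_map, Multiset.filter_filter]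
      congr 1
      refine Multiset.filter_congr fun z _ => ?_
      have hnorm : ‖(((starRingEnd ℂ) z)⁻¹ : ℂ)‖ = ‖z‖⁻¹ := by
        rw [norm_inv, RCLike.norm_conj]
      constructor
      · rintro ⟨h1, h2⟩
        rw [Function.comp, hnorm, inv_lt_one_iff₀] at h1
        rcases h1 with h1 | h1
        · have : (0 : ℝ) < ‖z‖ := norm_pos_iff.2 h2
          linarith
        · exact h1
      · intro h2
        have hz0 : z ≠ 0 := by
          intro h; rw [h] at h2; simp at h2; linarith
        refine ⟨?_, hz0⟩
        rw [Function.comp, hnorm, inv_lt_one_iff₀]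
        exact Or.inr h2
  omega


lemma deriv_B (ha : ∀ i, ‖a i‖ < 1) {c : ℂ} {B : ℂ → ℂ}
    (hBfun : B = fun z => c * (eval z (pP a) / eval z (qP a))) {z : ℂ} (hz : ‖z‖ < 1) :
    deriv B z = c * (eval z (WP a) / (eval z (qP a)) ^ 2) := by
  have hq : eval z (qP a) ≠ 0 := qP_eval_ne_zero a ha hz.le
  have h3 := (((pP a).hasDerivAt z).div ((qP a).hasDerivAt z) hq).const_mul c
  rw [hBfun, show (fun z => c * (eval z (pP a) / eval z (qP a))) =
    (fun y => c * ((fun x => eval x (pP a)) / fun x => eval x (qP a)) y) from rfl, h3.deriv]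
  have hkey := congrArg (eval z) (key_identity a)
  simp only [eval_sub, eval_mul] at hkey
  rw [← hkey]


end defs
end BlaschkeAux
end

open BlaschkeAux Polynomial


open Set Metric

theorem blaschke_critical_points_count (n : ℕ) (hn : 1 ≤ n) (c : ℂ) (a : Fin n → ℂ)
    (hc : ‖c‖ = 1) (ha : ∀ i, ‖a i‖ < 1)
    (B : ℂ → ℂ)
    (hB : ∀ z : ℂ, B z = c * ∏ i, (z - a i) / (1 - (starRingEnd ℂ) (a i) * z)) :
    ∃ (Z : Finset ℂ) (m : ℂ → ℕ),
      (↑Z = {z ∈ ball (0 : ℂ) 1 | deriv B z = 0}) ∧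
      (∀ z ∈ Z, ∃ g : ℂ → ℂ, AnalyticAt ℂ g z ∧ g z ≠ 0 ∧
        ∀ᶠ w in nhds z, deriv B w = (w - z) ^ (m z) * g w) ∧
      ∑ z ∈ Z, m z = n - 1 := by
  classical
  have hc0 : c ≠ 0 := by intro h; rw [h] at hc; simp at hc
  have hW0 : WP a ≠ 0 := WP_ne_zero a hn ha
  have hBfun : B = fun z => c * (eval z (pP a) / eval z (qP a)) := by
    funext z
    rw [hB z, Finset.prod_div_distrib, pP, qP]
    simp [eval_prod]
  refine ⟨((WP a).roots.filter (fun z => ‖z‖ < 1)).toFinset,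
    fun z => rootMultiplicity z (WP a), ?_, ?_, ?_⟩
  · ext z
    constructor
    · intro hzZ
      obtain ⟨hroot, hnorm⟩ := Multiset.mem_filter.1 (Multiset.mem_toFinset.1 hzZ)
      have hq : eval z (qP a) ≠ 0 := qP_eval_ne_zero a ha hnorm.le
      refine ⟨mem_ball_zero_iff.2 hnorm, ?_⟩
      rw [deriv_B a ha hBfun hnorm, (mem_roots'.1 hroot).2]
      simp
    · rintro ⟨hzb, hzd⟩
      have hnorm : ‖z‖ < 1 := mem_ball_zero_iff.1 hzb
      have hq : eval z (qP a) ≠ 0 := qP_eval_ne_zero a ha hnorm.le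
      rw [deriv_B a ha hBfun hnorm] at hzd
      have hev : eval z (WP a) = 0 := by
        rcases mul_eq_zero.1 hzd with h | h
        · exact absurd h hc0
        · rcases div_eq_zero_iff.1 h with h | h
          · exact h
          · exact absurd h (pow_ne_zero _ hq)
      exact Multiset.mem_toFinset.2 (Multiset.mem_filter.2 ⟨mem_roots'.2 ⟨hW0, hev⟩, hnorm⟩)
  · intro z hzZ
    obtain ⟨hroot, hnorm⟩ := Multiset.mem_filter.1 (Multiset.mem_toFinset.1 hzZ)
    have hq : eval z (qP a) ≠ 0 := qP_eval_ne_zero a ha hnorm.le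
    set U := (WP a) /ₘ (X - C z) ^ (rootMultiplicity z (WP a)) with hU
    have hUm : (X - C z) ^ (rootMultiplicity z (WP a)) * U = WP a :=
      pow_mul_divByMonic_rootMultiplicity_eq _ _
    have hUz : eval z U ≠ 0 := eval_divByMonic_pow_rootMultiplicity_ne_zero z hW0
    refine ⟨fun w => c * (eval w U / (eval w (qP a)) ^ 2), ?_, ?_, ?_⟩
    · refine DifferentiableOn.analyticAt (s := ball (0 : ℂ) 1) (fun w hw => ?_)
        (isOpen_ball.mem_nhds (mem_ball_zero_iff.2 hnorm))
      have hqw : eval w (qP a) ≠ 0 := qP_eval_ne_zero a ha (mem_ball_zero_iff.1 hw).le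
      exact (((U.differentiable.differentiableAt).div
        (((qP a).differentiable.differentiableAt).pow 2)
        (pow_ne_zero _ hqw)).const_mul c).differentiableWithinAt
    · exact mul_ne_zero hc0 (div_ne_zero hUz (pow_ne_zero _ hq))
    · filter_upwards [isOpen_ball.eventually_mem (mem_ball_zero_iff.2 hnorm)] with w hw
      rw [deriv_B a ha hBfun (mem_ball_zero_iff.1 hw)]
      conv_lhs => rw [← hUm]
      simp only [eval_mul, eval_pow, eval_sub, eval_X, eval_C]
      ring
  · rw [← count_in_disk a hn ha, ← Multiset.toFinset_sum_count_eq]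
    refine Finset.sum_congr rfl fun z hz => ?_
    have hp := (Multiset.mem_filter.1 (Multiset.mem_toFinset.1 hz)).2
    rw [Multiset.count_filter, if_pos hp, count_roots]
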